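/- arXiv:0911.2302 — 3 statements merged into one kernel-verified Lean document; each statement's English description precedes it below -/
import Mathlib

section
/- Let μ and μ̂ be real numbers with 0 < μ̂ < μ, and let y : ℕ → ℝ satisfy 0 ≤ yₙ ≤ 1 for all n. Define Q_μ̂ = e^{−μ̂}·Σ_{n=0}^∞ yₙ·μ̂ⁿ/n! and Q_μ = e^{−μ}·Σ_{n=0}^∞ yₙ·μⁿ/n! (both series converge). Then y₁ ≥ (μ/(μμ̂ − μ̂²)) · ( Q_μ̂·e^{μ̂} − Q_μ·e^{μ}·μ̂²/μ² − ((μ² − μ̂²)/μ²)·y₀ ). -/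
lemma decoy_summable_aux (ν : ℝ) (hν : 0 ≤ ν) (y : ℕ → ℝ)
    (hy : ∀ n, y n ∈ Set.Icc (0:ℝ) 1) :
    Summable (fun n : ℕ => y n * ν ^ n / n.factorial) := by
  refine Summable.of_nonneg_of_le (fun n => ?_) (fun n => ?_)
    (Real.summable_pow_div_factorial ν)
  · have := (hy n).1
    positivity
  · apply div_le_div_of_nonneg_right ?_ (by positivity)
    · calc y n * ν ^ n ≤ 1 * ν ^ n := by
            exact mul_le_mul_of_nonneg_right (hy n).2 (by positivity)
        _ = ν ^ n := one_mul _
  -- note: div_le_div_of_nonneg_right signature may differ; fix if needed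

/-- **Asymptotic decoy-state bound.** For yields `0 ≤ yₙ ≤ 1` and gains
`Q_ν = e^{−ν} Σₙ yₙ νⁿ/n!` with decoy intensity `0 < μ̂ < μ`, the single-photon yield
satisfies `y₁ ≥ (μ/(μμ̂ − μ̂²))(Q_μ̂ e^{μ̂} − Q_μ e^{μ} μ̂²/μ² − ((μ²−μ̂²)/μ²) y₀)`. -/
theorem decoy_single_photon_yield_bound (μ μhat : ℝ) (y : ℕ → ℝ)
    (hμ : 0 < μhat) (hμμ : μhat < μ) (hy : ∀ n, y n ∈ Set.Icc (0:ℝ) 1) :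
    Summable (fun n : ℕ => y n * μhat ^ n / n.factorial) ∧
    Summable (fun n : ℕ => y n * μ ^ n / n.factorial) ∧
    y 1 ≥ (μ / (μ * μhat - μhat ^ 2)) *
      ((Real.exp (-μhat) * ∑' n : ℕ, y n * μhat ^ n / n.factorial) * Real.exp μhat
        - (Real.exp (-μ) * ∑' n : ℕ, y n * μ ^ n / n.factorial) * Real.exp μ * μhat ^ 2 / μ ^ 2
        - ((μ ^ 2 - μhat ^ 2) / μ ^ 2) * y 0) := by
  have hμ0 : (0:ℝ) < μ := lt_trans hμ hμμ
  have hS1 : Summable (fun n : ℕ => y n * μhat ^ n / n.factorial) :=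
    decoy_summable_aux μhat hμ.le y hy
  have hS2 : Summable (fun n : ℕ => y n * μ ^ n / n.factorial) :=
    decoy_summable_aux μ hμ0.le y hy
  refine ⟨hS1, hS2, ?_⟩
  set A := ∑' n : ℕ, y n * μhat ^ n / n.factorial with hA
  set B := ∑' n : ℕ, y n * μ ^ n / n.factorial with hB
  -- key: μ²A - μ̂²B ≤ (μ²-μ̂²)y0 + (μ²μ̂-μ̂²μ)y1
  set f : ℕ → ℝ := fun n => μhat ^ 2 * (y n * μ ^ n / n.factorial)
      - μ ^ 2 * (y n * μhat ^ n / n.factorial) with hf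
  have hfs : Summable f := ((hS2.mul_left _).sub (hS1.mul_left _))
  have htsum : ∑' n, f n = μhat ^ 2 * B - μ ^ 2 * A := by
    rw [Summable.tsum_sub (hS2.mul_left _) (hS1.mul_left _), tsum_mul_left, tsum_mul_left]
  have hkey : ∑ n ∈ ({0,1} : Finset ℕ), f n ≤ ∑' n, f n := by
    refine Summable.sum_le_tsum _ (fun n hn => ?_) hfs
    simp only [Finset.mem_insert, Finset.mem_singleton, not_or] at hn
    obtain ⟨m, rfl⟩ : ∃ m, n = m + 2 := by
      refine ⟨n - 2, ?_⟩
      omega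
    have h1 : μ ^ 2 * μhat ^ (m + 2) ≤ μhat ^ 2 * μ ^ (m + 2) := by
      have : μhat ^ m ≤ μ ^ m := pow_le_pow_left₀ hμ.le hμμ.le m
      calc μ ^ 2 * μhat ^ (m + 2) = (μ ^ 2 * μhat ^ 2) * μhat ^ m := by ring
        _ ≤ (μ ^ 2 * μhat ^ 2) * μ ^ m := by
            exact mul_le_mul_of_nonneg_left this (by positivity)
        _ = μhat ^ 2 * μ ^ (m + 2) := by ring
    have hy0 := (hy (m + 2)).1
    have hfact : (0:ℝ) < (m + 2).factorial := by positivity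
    simp only [hf]
    rw [sub_nonneg]
    rw [mul_div_assoc', mul_div_assoc', div_le_div_iff₀ hfact hfact]
    nlinarith [mul_le_mul_of_nonneg_right (mul_le_mul_of_nonneg_left h1 hy0) hfact.le]
  have hsum01 : ∑ n ∈ ({0,1} : Finset ℕ), f n
      = (μhat ^ 2 * (y 0) - μ ^ 2 * (y 0))
        + (μhat ^ 2 * (y 1 * μ) - μ ^ 2 * (y 1 * μhat)) := by
    simp [hf]
    ring
  -- simplify the exponentials
  have he1 : Real.exp (-μhat) * A * Real.exp μhat = A := by
    rw [mul_right_comm, ← Real.exp_add]; simp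
  have he2 : Real.exp (-μ) * B * Real.exp μ = B := by
    rw [mul_right_comm, ← Real.exp_add]; simp
  rw [ge_iff_le, he1, mul_div_assoc, he2]
  have hden : (0:ℝ) < μ * μhat - μhat ^ 2 := by nlinarith
  have hk : μ ^ 2 * A - μhat ^ 2 * B - (μ ^ 2 - μhat ^ 2) * y 0
      ≤ (μ ^ 2 * μhat - μhat ^ 2 * μ) * y 1 := by
    rw [hsum01, htsum] at hkey
    nlinarith [hkey]
  have hx : A - B * (μhat ^ 2 / μ ^ 2) - (μ ^ 2 - μhat ^ 2) / μ ^ 2 * y 0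
      = (μ ^ 2 * A - μhat ^ 2 * B - (μ ^ 2 - μhat ^ 2) * y 0) / μ ^ 2 := by
    field_simp
  rw [hx, div_mul_eq_mul_div, div_le_iff₀ hden, ← mul_div_assoc,
    div_le_iff₀ (by positivity : (0:ℝ) < μ ^ 2)]
  nlinarith [hk, hμ0.le]
end

section
/- Let μ and μ̂ be real numbers with 0 < μ̂ < μ, and let y : ℕ → ℝ satisfy 0 ≤ yₙ ≤ 1 for all n. Define Q_μ̂ = e^{−μ̂}·Σ_{n=0}^∞ yₙ·μ̂ⁿ/n! and Q_μ = e^{−μ}·Σ_{n=0}^∞ yₙ·μⁿ/n!. Suppose real numbers q_vac, q_μ̂, q_μ and nonnegative real numbers ζ₀, ζ_μ̂, ζ_μ satisfy y₀ ≤ q_vac + 2ζ₀, Q_μ̂ ≥ q_μ̂ − 2ζ_μ̂ and Q_μ ≤ q_μ + 2ζ_μ. Then y₁ ≥ τ, where τ := (μ/(μμ̂ − μ̂²)) · ( (q_μ̂ − 2ζ_μ̂)·e^{μ̂} − (q_μ + 2ζ_μ)·e^{μ}·μ̂²/μ² − ((μ² − μ̂²)/μ²)·(q_vac + 2ζ₀)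 ). -/
private lemma decoy_summable (y : ℕ → ℝ) (hy : ∀ n, y n ∈ Set.Icc (0:ℝ) 1) (a : ℝ)
    (ha : 0 ≤ a) : Summable (fun n : ℕ => y n * a ^ n / n.factorial) := by
  apply Summable.of_nonneg_of_le
  · intro n
    have := (hy n).1
    positivity
  · intro n
    have hf : (0:ℝ) < n.factorial := by positivity
    have h1 : y n * a ^ n ≤ a ^ n := by
      nlinarith [(hy n).1, (hy n).2, pow_nonneg ha n]
    exact (div_le_div_iff_of_pos_right hf).2 h1
  · exact Real.summable_pow_div_factorial a

/-- **Finite-size decoy-state bound.** For yields `0 ≤ yₙ ≤ 1` and gains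
`Q_ν = e^{−ν} Σₙ yₙ νⁿ/n!` with decoy intensity `0 < μ̂ < μ`, if
`y₀ ≤ q_vac + 2ζ₀`, `Q_μ̂ ≥ q_μ̂ − 2ζ_μ̂` and `Q_μ ≤ q_μ + 2ζ_μ`, then `y₁ ≥ τ` where
`τ = (μ/(μμ̂ − μ̂²))((q_μ̂ − 2ζ_μ̂)e^{μ̂} − (q_μ + 2ζ_μ)e^{μ}μ̂²/μ² − ((μ²−μ̂²)/μ²)(q_vac + 2ζ₀))`. -/
theorem decoy_single_photon_yield_bound_finite (μ μhat : ℝ) (y : ℕ → ℝ)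
    (hμ : 0 < μhat) (hμμ : μhat < μ) (hy : ∀ n, y n ∈ Set.Icc (0:ℝ) 1)
    (q_vac q_μhat q_μ ζ₀ ζ_μhat ζ_μ : ℝ)
    (hζ₀ : 0 ≤ ζ₀) (hζμhat : 0 ≤ ζ_μhat) (hζμ : 0 ≤ ζ_μ)
    (h0 : y 0 ≤ q_vac + 2 * ζ₀)
    (hQhat : Real.exp (-μhat) * ∑' n : ℕ, y n * μhat ^ n / n.factorial ≥ q_μhat - 2 * ζ_μhat)
    (hQ : Real.exp (-μ) * ∑' n : ℕ, y n * μ ^ n / n.factorial ≤ q_μ + 2 * ζ_μ) :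
    y 1 ≥ (μ / (μ * μhat - μhat ^ 2)) *
      ((q_μhat - 2 * ζ_μhat) * Real.exp μhat
        - (q_μ + 2 * ζ_μ) * Real.exp μ * μhat ^ 2 / μ ^ 2
        - ((μ ^ 2 - μhat ^ 2) / μ ^ 2) * (q_vac + 2 * ζ₀)) := by
  have hμ0 : 0 < μ := hμ.trans hμμ
  set Sh := ∑' n : ℕ, y n * μhat ^ n / n.factorial with hSh
  set S := ∑' n : ℕ, y n * μ ^ n / n.factorial with hS
  have sumh : Summable (fun n : ℕ => y n * μhat ^ n / n.factorial) :=
    decoy_summable y hy μhat hμ.le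
  have sum : Summable (fun n : ℕ => y n * μ ^ n / n.factorial) :=
    decoy_summable y hy μ hμ0.le
  -- the combined series
  set f : ℕ → ℝ := fun n => μ ^ 2 * (y n * μhat ^ n / n.factorial)
      - μhat ^ 2 * (y n * μ ^ n / n.factorial) with hf
  have sumf : Summable f := ((sumh.mul_left _).sub (sum.mul_left _))
  have hT : ∑' n, f n = μ ^ 2 * Sh - μhat ^ 2 * S := by
    rw [Summable.tsum_sub (sumh.mul_left (μ ^ 2)) (sum.mul_left (μhat ^ 2)), tsum_mul_left, tsum_mul_left]
  have hsplit : ∑' n, f n = f 0 + (f 1 + ∑' n, f (n + 2)) := by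
    rw [Summable.tsum_eq_zero_add sumf]
    congr 1
    rw [Summable.tsum_eq_zero_add ((summable_nat_add_iff 1).2 sumf)]
  have htail : ∑' n, f (n + 2) ≤ 0 := by
    apply tsum_nonpos
    intro n
    have hy0 := (hy (n + 2)).1
    have hpow : μhat ^ n ≤ μ ^ n := pow_le_pow_left₀ hμ.le hμμ.le n
    have hfac : (0:ℝ) < (n + 2).factorial := by positivity
    simp only [hf]
    rw [sub_nonpos]
    have h1 : μ ^ 2 * (y (n+2) * μhat ^ (n+2)) ≤ μhat ^ 2 * (y (n+2) * μ ^ (n+2)) := by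
      have : μ ^ 2 * μhat ^ (n+2) ≤ μhat ^ 2 * μ ^ (n+2) := by
        have := mul_le_mul_of_nonneg_left hpow
          (by positivity : (0:ℝ) ≤ μ ^ 2 * μhat ^ 2)
        calc μ ^ 2 * μhat ^ (n+2) = μ ^ 2 * μhat ^ 2 * μhat ^ n := by ring
          _ ≤ μ ^ 2 * μhat ^ 2 * μ ^ n := this
          _ = μhat ^ 2 * μ ^ (n+2) := by ring
      nlinarith [(hy (n+2)).1, (hy (n+2)).2, pow_nonneg hμ.le (n+2), pow_nonneg hμ0.le (n+2)]
    rw [← mul_div_assoc, ← mul_div_assoc]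
    exact (div_le_div_iff_of_pos_right hfac).2 h1
  have hkey : μ ^ 2 * Sh - μhat ^ 2 * S ≤
      y 0 * (μ ^ 2 - μhat ^ 2) + y 1 * (μ * μhat * (μ - μhat)) := by
    have hf0 : f 0 = y 0 * (μ ^ 2 - μhat ^ 2) := by simp [hf]; ring
    have hf1 : f 1 = y 1 * (μ * μhat * (μ - μhat)) := by simp [hf]; ring
    rw [← hT, hsplit, hf0, hf1]; linarith
  -- bounds on Sh and S
  have hSh_lb : (q_μhat - 2 * ζ_μhat) * Real.exp μhat ≤ Sh := by
    calc (q_μhat - 2 * ζ_μhat) * Real.exp μhat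
        ≤ (Real.exp (-μhat) * Sh) * Real.exp μhat :=
          mul_le_mul_of_nonneg_right hQhat (Real.exp_pos _).le
      _ = Sh := by
          rw [mul_comm (Real.exp (-μhat)) Sh, mul_assoc, ← Real.exp_add]; simp
  have hS_ub : S ≤ (q_μ + 2 * ζ_μ) * Real.exp μ := by
    calc S = (Real.exp (-μ) * S) * Real.exp μ := by
            rw [mul_comm (Real.exp (-μ)) S, mul_assoc, ← Real.exp_add]; simp
      _ ≤ (q_μ + 2 * ζ_μ) * Real.exp μ :=
          mul_le_mul_of_nonneg_right hQ (Real.exp_pos _).le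
  -- combine
  have hA := mul_le_mul_of_nonneg_left hSh_lb (sq_nonneg μ)
  have hB := mul_le_mul_of_nonneg_left hS_ub (sq_nonneg μhat)
  have hC := mul_le_mul_of_nonneg_left h0 (by nlinarith : (0:ℝ) ≤ μ ^ 2 - μhat ^ 2)
  have key' : μ ^ 2 * ((q_μhat - 2 * ζ_μhat) * Real.exp μhat)
      - μhat ^ 2 * ((q_μ + 2 * ζ_μ) * Real.exp μ)
      - (μ ^ 2 - μhat ^ 2) * (q_vac + 2 * ζ₀)
      ≤ y 1 * (μ * μhat * (μ - μhat)) := by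
    linarith [hA, hB, hC, hkey]
  have hd : 0 < μ * μhat * (μ - μhat) := by
    have h1 : 0 < μ - μhat := by linarith
    positivity
  have heq : (μ / (μ * μhat - μhat ^ 2)) *
      ((q_μhat - 2 * ζ_μhat) * Real.exp μhat
        - (q_μ + 2 * ζ_μ) * Real.exp μ * μhat ^ 2 / μ ^ 2
        - ((μ ^ 2 - μhat ^ 2) / μ ^ 2) * (q_vac + 2 * ζ₀))
      = (μ ^ 2 * ((q_μhat - 2 * ζ_μhat) * Real.exp μhat)
        - μhat ^ 2 * ((q_μ + 2 * ζ_μ) * Real.exp μ)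
        - (μ ^ 2 - μhat ^ 2) * (q_vac + 2 * ζ₀)) / (μ * μhat * (μ - μhat)) := by
    have h1 : μ * μhat - μhat ^ 2 ≠ 0 := by nlinarith
    have h2 : μ ≠ 0 := hμ0.ne'
    field_simp
  rw [ge_iff_le, heq, div_le_iff₀ hd]
  linarith [key']
end

section
/- Let n ≥ 1 be an integer, and let x ∈ (0,1), p_d ∈ (0,1) and s > 0 be real numbers. Define weights w⁰, w¹ on {0, 1, …, n} by w⁰(m) = ((1−p_d)·s/(n+1))·( (xᵐ − xⁿ) + p_d·xⁿ ) and w¹(m) = ((1−p_d)·s/(n+1))·( (x^{n−m} − xⁿ) + p_d·xⁿ ), and set c = Σ_{m=0}^n w⁰(m). Then c > 0, and the quantity P_err := 1/2 − (1/(4c))·((1−p_d)·s/(n+1))·Σ_{m=0}^n |xᵐ − x^{n−m}| satisfies 0 < P_err < 1/2. -/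
/-- For a PDC source, dishonest Bob's minimal error probability `P_err = p^{d,n}_{B,err}`
for decoding a bit from an `n`-photon emission (given the basis for free) is strictly
between `0` and `1/2`: multi-photon emissions give him nontrivial but not full information. -/
theorem pdc_error_nontrivial (n : ℕ) (hn : 1 ≤ n) (x p_d s : ℝ)
    (hx : x ∈ Set.Ioo (0:ℝ) 1) (hpd : p_d ∈ Set.Ioo (0:ℝ) 1) (hs : 0 < s)
    (w0 : ℕ → ℝ)
    (hw0 : ∀ m, w0 m = (1 - p_d) * s / (n + 1) * ((x ^ m - x ^ n) + p_d * x ^ n))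
    (c : ℝ) (hc : c = ∑ m ∈ Finset.range (n + 1), w0 m) :
    0 < c ∧
    0 < 1 / 2 - (1 / (4 * c)) * ((1 - p_d) * s / (n + 1)) *
        ∑ m ∈ Finset.range (n + 1), |x ^ m - x ^ (n - m)| ∧
    1 / 2 - (1 / (4 * c)) * ((1 - p_d) * s / (n + 1)) *
        ∑ m ∈ Finset.range (n + 1), |x ^ m - x ^ (n - m)| < 1 / 2 := by
  obtain ⟨hx0, hx1⟩ := hx
  obtain ⟨hpd0, hpd1⟩ := hpd
  set k : ℝ := (1 - p_d) * s / (n + 1) with hk_def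
  have hn1 : (0:ℝ) < (n : ℝ) + 1 := by positivity
  have hk : 0 < k := div_pos (mul_pos (by linarith) hs) hn1
  have hxn : 0 < x ^ n := pow_pos hx0 n
  have hmono : ∀ m ∈ Finset.range (n + 1), x ^ n ≤ x ^ m := by
    intro m hm
    exact pow_le_pow_of_le_one hx0.le hx1.le (Nat.lt_succ_iff.mp (Finset.mem_range.mp hm))
  -- c is positive
  have hcpos : 0 < c := by
    rw [hc]
    apply Finset.sum_pos
    · intro m hm
      rw [hw0 m]
      have h1 := hmono m hm
      have h2 : 0 < (x ^ m - x ^ n) + p_d * x ^ n := by nlinarith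
      exact mul_pos hk h2
    · exact ⟨0, Finset.mem_range.mpr (Nat.succ_pos n)⟩
  set S : ℝ := ∑ m ∈ Finset.range (n + 1), |x ^ m - x ^ (n - m)| with hS_def
  -- S is positive
  have hSpos : 0 < S := by
    have h0 : |x ^ 0 - x ^ (n - 0)| ≤ S :=
      Finset.single_le_sum (f := fun m => |x ^ m - x ^ (n - m)|)
        (fun m _ => abs_nonneg _) (Finset.mem_range.mpr (Nat.succ_pos n))
    have hxn1 : x ^ n < 1 := pow_lt_one₀ hx0.le hx1 (by omega)
    have : 0 < |x ^ 0 - x ^ (n - 0)| := by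
      simp only [pow_zero, Nat.sub_zero]
      rw [abs_of_pos (by linarith)]
      linarith
    linarith
  -- key inequality: k * S < 2 * c
  have hcT : c = k * ∑ m ∈ Finset.range (n + 1),
      ((x ^ m - x ^ n) + p_d * x ^ n) := by
    rw [hc, Finset.mul_sum]
    exact Finset.sum_congr rfl fun m _ => (hw0 m)
  have hSle : S ≤ ∑ m ∈ Finset.range (n + 1),
      ((x ^ m - x ^ n) + (x ^ (n - m) - x ^ n)) := by
    apply Finset.sum_le_sum
    intro m hm
    have h1 := hmono m hm
    have h2 : x ^ n ≤ x ^ (n - m) :=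
      pow_le_pow_of_le_one hx0.le hx1.le (Nat.sub_le n m)
    rw [abs_sub_le_iff]
    constructor <;> linarith
  have hrefl : ∑ m ∈ Finset.range (n + 1), (x ^ (n - m) - x ^ n)
      = ∑ m ∈ Finset.range (n + 1), (x ^ m - x ^ n) := by
    have := Finset.sum_range_reflect (fun m => x ^ m - x ^ n) (n + 1)
    simpa using this
  have hS2 : S ≤ 2 * ∑ m ∈ Finset.range (n + 1), (x ^ m - x ^ n) := by
    calc S ≤ ∑ m ∈ Finset.range (n + 1),
        ((x ^ m - x ^ n) + (x ^ (n - m) - x ^ n)) := hSle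
      _ = (∑ m ∈ Finset.range (n + 1), (x ^ m - x ^ n))
          + ∑ m ∈ Finset.range (n + 1), (x ^ (n - m) - x ^ n) := by
            rw [Finset.sum_add_distrib]
      _ = 2 * ∑ m ∈ Finset.range (n + 1), (x ^ m - x ^ n) := by rw [hrefl]; ring
  have hTsplit : ∑ m ∈ Finset.range (n + 1), ((x ^ m - x ^ n) + p_d * x ^ n)
      = (∑ m ∈ Finset.range (n + 1), (x ^ m - x ^ n)) + (n + 1) * (p_d * x ^ n) := by
    rw [Finset.sum_add_distrib, Finset.sum_const, Finset.card_range]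
    push_cast
    ring
  have hkey : k * S < 2 * c := by
    rw [hcT, hTsplit]
    have hpos : 0 < (↑n + 1) * (p_d * x ^ n) := by positivity
    nlinarith [hk, hS2]
  refine ⟨hcpos, ?_, ?_⟩
  · have h4c : 0 < 4 * c := by linarith
    have : 1 / (4 * c) * k * S < 1 / 2 := by
      rw [show 1 / (4 * c) * k * S = k * S / (4 * c) by ring, div_lt_iff₀ h4c]
      linarith
    linarith
  · have hpos : 0 < 1 / (4 * c) * k * S := by positivity
    linarith
end
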